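/- For the network ẋ = -Lx over the LSCC condensation of a directed graph: (a) every node with no incoming edge is a cluster-root (CR) node, and (b) every node with exactly one incoming edge is a cluster-follower (CF) node (i.e., it lies in the same topological cluster as its unique in-neighbor and is not the CR node of that cluster). -/

import Mathlib

/-- Conditions (C1) and (C2): `G[S]` has a directed spanning tree, and either no
node of `S`, or exactly one node of `S` which is a root of `G[S]`, has incoming
edges from outside `S`. -/
def SatC1C2 {V : Type*} (E : V → V → Prop) (S : Set V) : Prop :=
  (∃ r ∈ S, ∀ j ∈ S,
    Relation.ReflTransGen (fun a b => a ∈ S ∧ b ∈ S ∧ E a b) r j) ∧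
  ((∀ i ∈ S, ∀ j ∉ S, ¬ E j i) ∨
    ∃ r ∈ S,
      (∀ j ∈ S, Relation.ReflTransGen (fun a b => a ∈ S ∧ b ∈ S ∧ E a b) r j) ∧
      (∃ j ∉ S, E j r) ∧
      ∀ i ∈ S, (∃ j ∉ S, E j i) → i = r)

/-- A topological cluster, by the characterization theorem: a nonempty maximal
set satisfying (C1) and (C2). -/
def TopCluster {V : Type*} (E : V → V → Prop) (S : Set V) : Prop :=
  S.Nonempty ∧ SatC1C2 E S ∧ ∀ S' : Set V, S ⊆ S' → SatC1C2 E S' → S' = S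

/-- `v` is the cluster-root (CR) node of cluster `S`: it belongs to `S` and is
either a leader node (no incoming edges in `G`) or a root of `G[S]` having
incoming edges from outside `S`. -/
def IsCR {V : Type*} (E : V → V → Prop) (S : Set V) (v : V) : Prop :=
  v ∈ S ∧ ((∀ j, ¬ E j v) ∨
    ((∀ j ∈ S, Relation.ReflTransGen (fun a b => a ∈ S ∧ b ∈ S ∧ E a b) v j) ∧
      ∃ j ∉ S, E j v))

/-- The graph has no leader-like strongly connected component: no nonempty,
internally strongly connected node set containing an edge and receiving no
incoming edge from outside. -/
def NoLSCC {V : Type*} (E : V → V → Prop) : Prop :=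
  ¬ ∃ S : Set V,
    (∃ a ∈ S, ∃ b ∈ S, E a b) ∧
    (∀ a ∈ S, ∀ b ∈ S,
      Relation.ReflTransGen (fun x y => x ∈ S ∧ y ∈ S ∧ E x y) a b) ∧
    (∀ i ∈ S, ∀ j ∉ S, ¬ E j i)

/-- Over the LSCC condensation of a graph (a graph with no LSCCs):
(a) every node with no incoming edge is the CR node of any topological cluster
containing it; (b) every node with exactly one incoming edge lies in the same
topological cluster as its unique in-neighbor and is not the CR node of that
cluster. -/
theorem stmt15 {V : Type*} [Fintype V] (E : V → V → Prop) (h : NoLSCC E) :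
    (∀ v : V, (∀ j, ¬ E j v) →
      ∀ S : Set V, TopCluster E S → v ∈ S → IsCR E S v) ∧
    (∀ v u : V, E u v → (∀ w, E w v → w = u) →
      ∀ S : Set V, TopCluster E S → v ∈ S → u ∈ S ∧ ¬ IsCR E S v) := by
  constructor
  · intro v hv S _ hvS
    exact ⟨hvS, Or.inl hv⟩
  · intro v u huv hw S hS hvS
    obtain ⟨hne, ⟨hC1, hC2⟩, hmax⟩ := hS
    have huS : u ∈ S := by
      by_contra huS
      -- v receives an outside edge, so the second disjunct of C2 holds with r = v
      have hC2' : ∃ r ∈ S,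
          (∀ j ∈ S, Relation.ReflTransGen (fun a b => a ∈ S ∧ b ∈ S ∧ E a b) r j) ∧
          (∃ j ∉ S, E j r) ∧
          ∀ i ∈ S, (∃ j ∉ S, E j i) → i = r := by
        rcases hC2 with h1 | h2
        · exact absurd huv (h1 v hvS u huS)
        · exact h2
      obtain ⟨r, hrS, hreach, _, huniq⟩ := hC2'
      have hvr : v = r := huniq v hvS ⟨u, huS, huv⟩
      subst hvr
      -- Extend S by u
      set S' : Set V := insert u S with hS'
      have hsub : S ⊆ S' := Set.subset_insert _ _
      have hmono : ∀ a b, (a ∈ S ∧ b ∈ S ∧ E a b) → (a ∈ S' ∧ b ∈ S' ∧ E a b) :=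
        fun a b ⟨ha, hb, he⟩ => ⟨hsub ha, hsub hb, he⟩
      have hreach' : ∀ j ∈ S',
          Relation.ReflTransGen (fun a b => a ∈ S' ∧ b ∈ S' ∧ E a b) u j := by
        intro j hj
        rcases hj with hj | hj
        · subst hj; exact Relation.ReflTransGen.refl
        · exact Relation.ReflTransGen.head ⟨Set.mem_insert _ _, hsub hrS, huv⟩
            (Relation.ReflTransGen.mono hmono _ _ (hreach j hj))
      have hC1' : ∃ r' ∈ S', ∀ j ∈ S',
          Relation.ReflTransGen (fun a b => a ∈ S' ∧ b ∈ S' ∧ E a b) r' j :=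
        ⟨u, Set.mem_insert _ _, hreach'⟩
      have hC2'' : (∀ i ∈ S', ∀ j ∉ S', ¬ E j i) ∨
          ∃ r' ∈ S',
            (∀ j ∈ S', Relation.ReflTransGen (fun a b => a ∈ S' ∧ b ∈ S' ∧ E a b) r' j) ∧
            (∃ j ∉ S', E j r') ∧
            ∀ i ∈ S', (∃ j ∉ S', E j i) → i = r' := by
        have huniq' : ∀ i ∈ S', (∃ j ∉ S', E j i) → i = u := by
          intro i hi ⟨j, hjS', hji⟩
          rcases hi with hi | hi
          · exact hi
          · exfalso
            have hjS : j ∉ S := fun hj => hjS' (hsub hj)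
            have : i = v := huniq i hi ⟨j, hjS, hji⟩
            subst this
            exact hjS' (hw j hji ▸ Set.mem_insert _ _)
        by_cases hu : ∃ j ∉ S', E j u
        · exact Or.inr ⟨u, Set.mem_insert _ _, hreach', hu, huniq'⟩
        · left
          intro i hi j hj hji
          have : i = u := huniq' i hi ⟨j, hj, hji⟩
          subst this
          exact hu ⟨j, hj, hji⟩
      have : S' = S := hmax S' hsub ⟨hC1', hC2''⟩
      exact huS (this ▸ Set.mem_insert u S)
    refine ⟨huS, ?_⟩
    rintro ⟨-, hcr | ⟨-, j, hjS, hjv⟩⟩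
    · exact hcr u huv
    · exact hjS (hw j hjv ▸ huS)
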